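/- The matrix Ψ is invertible and its inverse has the checkerboard sign pattern: for all indices i, j one has (−1)^{i+j} (Ψ^{-1})_{ij} > 0. Equivalently, every entry of the matrix σ* Ψ^{-1} σ* is positive. -/

import Mathlib

open Matrix BigOperators

/-- The determinant of a Cauchy matrix `1/(x i + y j)` with `x`, `y` positive and
strictly increasing is positive. -/
lemma cauchy_det_pos : ∀ (m : ℕ) (x y : Fin m → ℝ), (∀ i, 0 < x i) → (∀ j, 0 < y j) →
    StrictMono x → StrictMono y →
    0 < (Matrix.of fun i j => 1 / (x i + y j) : Matrix (Fin m) (Fin m) ℝ).det := by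
  intro m
  induction m with
  | zero => intro x y _ _ _ _; simp
  | succ m ih =>
    intro x y hx hy hxm hym
    set l : Fin (m + 1) := Fin.last m with hl
    have hd : ∀ i j : Fin (m + 1), 0 < x i + y j := fun i j => add_pos (hx i) (hy j)
    have hne : ∀ i j : Fin (m + 1), x i + y j ≠ 0 := fun i j => (hd i j).ne'
    have hlt : ∀ i : Fin (m + 1), i ≠ l → i < l := fun i hi =>
      lt_of_le_of_ne (Fin.le_last i) hi
    set C : Matrix (Fin (m + 1)) (Fin (m + 1)) ℝ :=
      Matrix.of fun i j => 1 / (x i + y j) with hC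
    set B : Matrix (Fin (m + 1)) (Fin (m + 1)) ℝ :=
      Matrix.of (fun i j =>
        if i = l then 1 / (x l + y j) else 1 / (x i + y j) - 1 / (x l + y j)) with hB
    set F : Matrix (Fin (m + 1)) (Fin (m + 1)) ℝ :=
      Matrix.of (fun i j => if i = l then 1 else 1 / (x i + y j)) with hF
    set F2 : Matrix (Fin (m + 1)) (Fin (m + 1)) ℝ :=
      Matrix.of (fun i j =>
        if j = l then (if i = l then 1 else 1 / (x i + y l))
        else (if i = l then 0 else 1 / (x i + y j) - 1 / (x i + y l))) with hF2
    set G : Matrix (Fin (m + 1)) (Fin (m + 1)) ℝ :=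
      Matrix.of (fun i j =>
        if i = l then (if j = l then (1 : ℝ) else 0)
        else (if j = l then 1 else 1 / (x i + y j))) with hG
    set C' : Matrix (Fin m) (Fin m) ℝ :=
      Matrix.of (fun i j => 1 / (x i.castSucc + y j.castSucc)) with hC'
    -- Step 1 : subtract last row from the other rows
    have h1 : C.det = B.det := by
      apply Matrix.det_eq_of_forall_row_eq_smul_add_const
        (fun i => if i = l then 0 else 1) l (by simp)
      intro i j
      by_cases hi : i = l <;> simp [hC, hB, hi]
    -- Step 2 : factor out row and column scalars
    have h2 : B = Matrix.diagonal (fun i => if i = l then 1 else x l - x i) * F *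
        Matrix.diagonal (fun j => 1 / (x l + y j)) := by
      ext i j
      rw [Matrix.mul_diagonal, Matrix.diagonal_mul]
      by_cases hi : i = l
      · simp [hB, hF, hi]
      · have e1 : x i + y j ≠ 0 := hne i j
        have e2 : x l + y j ≠ 0 := hne l j
        have e1' : y j + x i ≠ 0 := by rw [add_comm]; exact e1
        have e2' : y j + x l ≠ 0 := by rw [add_comm]; exact e2
        simp only [hB, hF, Matrix.of_apply, hi, if_neg hi]
        field_simp
        try ring
        try simp
        have hD : x l * y j + x l * x i + y j * x i + y j ^ 2 = (y j + x l) * (y j + x i) := by ring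
        have ha : (y j + x l) * (y j + x l)⁻¹ = 1 := mul_inv_cancel₀ e2'
        rw [hD, mul_inv]
        linear_combination (x l - x i) * (y j + x i)⁻¹ * ha
    -- Step 3 : subtract last column from the other columns
    have h3 : F.det = F2.det := by
      rw [← Matrix.det_transpose F, ← Matrix.det_transpose F2]
      apply Matrix.det_eq_of_forall_row_eq_smul_add_const
        (fun i => if i = l then 0 else 1) l (by simp)
      intro i j
      by_cases hi : i = l <;> by_cases hj : j = l <;>
        simp [hF, hF2, Matrix.transpose_apply, hi, hj]
    -- Step 4 : factor out row and column scalars again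
    have h4 : F2 = Matrix.diagonal (fun i => if i = l then 1 else 1 / (x i + y l)) * G *
        Matrix.diagonal (fun j => if j = l then 1 else y l - y j) := by
      ext i j
      rw [Matrix.mul_diagonal, Matrix.diagonal_mul]
      by_cases hi : i = l <;> by_cases hj : j = l
      · simp [hF2, hG, hi, hj]
      · simp [hF2, hG, hi, hj]
      · simp [hF2, hG, hi, hj]
      · have e1 : x i + y j ≠ 0 := hne i j
        have e2 : x i + y l ≠ 0 := hne i l
        have e1' : y j + x i ≠ 0 := by rw [add_comm]; exact e1
        have e2' : y l + x i ≠ 0 := by rw [add_comm]; exact e2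
        simp only [hF2, hG, Matrix.of_apply, if_neg hi, if_neg hj]
        field_simp
        try ring
        try simp
    -- Step 5 : expand along the last row
    have h5 : G.det = C'.det := by
      rw [Matrix.det_succ_row G l, Finset.sum_eq_single l]
      · have hGll : G l l = 1 := by simp [hG]
        have hsub : G.submatrix l.succAbove l.succAbove = C' := by
          ext i j
          have hi : (Fin.castSucc i) ≠ l := (Fin.castSucc_lt_last i).ne
          have hj : (Fin.castSucc j) ≠ l := (Fin.castSucc_lt_last j).ne
          simp [hG, hC', Matrix.submatrix_apply, hl, Fin.succAbove_last, hi, hj]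
        rw [hGll, hsub]
        have : ((-1 : ℝ)) ^ ((l : ℕ) + (l : ℕ)) = 1 :=
          Even.neg_one_pow ⟨(l : ℕ), rfl⟩
        rw [this]; ring
      · intro j _ hj
        have : G l j = 0 := by simp [hG, hj]
        simp [this]
      · simp
    -- positivity of all scalar factors
    have hr1 : 0 < ∏ i, (if i = l then 1 else x l - x i) := by
      apply Finset.prod_pos
      intro i _
      by_cases hi : i = l
      · simp [hi]
      · simp only [if_neg hi]
        exact sub_pos.mpr (hxm (hlt i hi))
    have hr2 : 0 < ∏ j, 1 / (x l + y j) :=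
      Finset.prod_pos fun j _ => one_div_pos.mpr (hd l j)
    have hr3 : 0 < ∏ i, (if i = l then 1 else 1 / (x i + y l)) := by
      apply Finset.prod_pos
      intro i _
      by_cases hi : i = l
      · simp [hi]
      · simp only [if_neg hi]
        exact one_div_pos.mpr (hd i l)
    have hr4 : 0 < ∏ j, (if j = l then 1 else y l - y j) := by
      apply Finset.prod_pos
      intro j _
      by_cases hj : j = l
      · simp [hj]
      · simp only [if_neg hj]
        exact sub_pos.mpr (hym (hlt j hj))
    have hC'pos : 0 < C'.det := by
      exact ih (fun i => x i.castSucc) (fun j => y j.castSucc)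
        (fun i => hx _) (fun j => hy _)
        (fun a b hab => hxm (Fin.strictMono_castSucc hab))
        (fun a b hab => hym (Fin.strictMono_castSucc hab))
    have : C.det = (∏ i, (if i = l then 1 else x l - x i)) *
        ((∏ i, (if i = l then 1 else 1 / (x i + y l))) * C'.det *
          (∏ j, (if j = l then 1 else y l - y j))) *
        (∏ j, 1 / (x l + y j)) := by
      rw [h1, h2, Matrix.det_mul, Matrix.det_mul, Matrix.det_diagonal, Matrix.det_diagonal,
        h3, h4, Matrix.det_mul, Matrix.det_mul, Matrix.det_diagonal, Matrix.det_diagonal, h5]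
    rw [this]
    exact mul_pos (mul_pos hr1 (mul_pos (mul_pos hr3 hC'pos) hr4)) hr2

/-- The inverse of the Cauchy matrix `Ψ` (with `Ψᵢⱼ = 1/(λᵢ + λⱼ)`,
`0 < λ₁ < ⋯ < λₙ`) exists and has the checkerboard sign pattern; equivalently,
every entry of `σ* Ψ⁻¹ σ*` is positive, where `σ*` is the diagonal signature
matrix with `i`-th diagonal entry `(-1)^i`. -/
theorem Psi_inv_checkerboard (n : ℕ) (hn : 0 < n) (lam : Fin n → ℝ)
    (hpos : ∀ i, 0 < lam i) (hmono : StrictMono lam) :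
    IsUnit (Matrix.of fun i j => 1 / (lam i + lam j) : Matrix (Fin n) (Fin n) ℝ).det ∧
      (∀ i j : Fin n,
        0 < (-1 : ℝ) ^ ((i : ℕ) + (j : ℕ)) *
          (Matrix.of fun i j => 1 / (lam i + lam j) : Matrix (Fin n) (Fin n) ℝ)⁻¹ i j) ∧
      ∀ i j : Fin n,
        0 < (Matrix.diagonal (fun i : Fin n => (-1 : ℝ) ^ (i : ℕ)) *
              (Matrix.of fun i j => 1 / (lam i + lam j) : Matrix (Fin n) (Fin n) ℝ)⁻¹ *
              Matrix.diagonal (fun i : Fin n => (-1 : ℝ) ^ (i : ℕ))) i j := by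
  obtain ⟨m, rfl⟩ : ∃ m, n = m + 1 := ⟨n - 1, by omega⟩
  set Ψ : Matrix (Fin (m + 1)) (Fin (m + 1)) ℝ :=
    Matrix.of fun i j => 1 / (lam i + lam j) with hΨ
  have hdet : 0 < Ψ.det := cauchy_det_pos (m + 1) lam lam hpos hpos hmono hmono
  have hu : IsUnit Ψ.det := isUnit_iff_ne_zero.mpr hdet.ne'
  have key : ∀ i j : Fin (m + 1), 0 < (-1 : ℝ) ^ ((i : ℕ) + (j : ℕ)) * Ψ⁻¹ i j := by
    intro i j
    have hsub : 0 < (Ψ.submatrix j.succAbove i.succAbove).det := by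
      have := cauchy_det_pos m (fun a => lam (j.succAbove a)) (fun b => lam (i.succAbove b))
        (fun a => hpos _) (fun b => hpos _)
        (fun a b hab => hmono (Fin.strictMono_succAbove j hab))
        (fun a b hab => hmono (Fin.strictMono_succAbove i hab))
      convert this using 2
      rfl
    have hinv : Ψ⁻¹ i j = Ψ.det⁻¹ *
        ((-1 : ℝ) ^ ((j : ℕ) + (i : ℕ)) * (Ψ.submatrix j.succAbove i.succAbove).det) := by
      rw [Matrix.inv_def, Matrix.smul_apply, Matrix.adjugate_fin_succ_eq_det_submatrix,
        Ring.inverse_eq_inv, smul_eq_mul]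
    rw [hinv]
    have hsign : (-1 : ℝ) ^ ((i : ℕ) + (j : ℕ)) * (-1 : ℝ) ^ ((j : ℕ) + (i : ℕ)) = 1 := by
      rw [← pow_add]
      exact Even.neg_one_pow ⟨(i : ℕ) + (j : ℕ), by ring⟩
    have : (-1 : ℝ) ^ ((i : ℕ) + (j : ℕ)) *
        (Ψ.det⁻¹ * ((-1 : ℝ) ^ ((j : ℕ) + (i : ℕ)) * (Ψ.submatrix j.succAbove i.succAbove).det))
        = Ψ.det⁻¹ * (Ψ.submatrix j.succAbove i.succAbove).det := by
      rw [show (-1 : ℝ) ^ ((i : ℕ) + (j : ℕ)) *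
        (Ψ.det⁻¹ * ((-1 : ℝ) ^ ((j : ℕ) + (i : ℕ)) * (Ψ.submatrix j.succAbove i.succAbove).det))
        = ((-1 : ℝ) ^ ((i : ℕ) + (j : ℕ)) * (-1 : ℝ) ^ ((j : ℕ) + (i : ℕ))) *
          (Ψ.det⁻¹ * (Ψ.submatrix j.succAbove i.succAbove).det) from by ring, hsign, one_mul]
    rw [this]
    positivity
  refine ⟨hu, key, fun i j => ?_⟩
  have : (Matrix.diagonal (fun i : Fin (m + 1) => (-1 : ℝ) ^ (i : ℕ)) * Ψ⁻¹ *
      Matrix.diagonal (fun i : Fin (m + 1) => (-1 : ℝ) ^ (i : ℕ))) i j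
      = (-1 : ℝ) ^ ((i : ℕ) + (j : ℕ)) * Ψ⁻¹ i j := by
    rw [Matrix.mul_diagonal, Matrix.diagonal_mul, pow_add]
    ring
  rw [this]
  exact key i j
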